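/- A bounded variation property: let h ∈ C_b^{1,2}([0,T]×Ō) and (μ, m) ∈ R. Then there exists a constant C = C(b, σ, h) > 0 such that for every ψ ∈ C¹([0,T]), ∫₀^T ψ′(t) (∫_{Ō×A} h(t,x) m_t(dx,da)) dt ≤ C‖ψ‖_∞. In particular, the function t ↦ ∫_{Ō×A} h(t,x) m_t(dx,da) belongs to L¹((0,T)) with L¹-norm at most T‖h‖_∞, and its variation V := sup{∫₀^T ψ′(t) (∫_{Ō×A} h(t,x) m_t(dx,da)) dt : ψ ∈ C_c¹((0,T)), ‖ψ‖_∞ ≤ 1} satisfies V ≤ C; hence it is of bounded variation on (0,T) with BV norm at most T‖h‖_∞ + C. -/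

import Mathlib

open MeasureTheory Filter Set Topology

noncomputable section

/-- Membership in `C_b^{1,2}([0,T] × closure O)`: `u` together with its partial
derivatives `ut = ∂_t u`, `ux = ∂_x u`, `uxx = ∂_xx u`, all continuous and bounded
on `[0,T] × closure O`. -/
structure IsCb12 (T : ℝ) (O : Set ℝ) (u ut ux uxx : ℝ → ℝ → ℝ) : Prop where
  cont : ContinuousOn (fun p : ℝ × ℝ => u p.1 p.2) (Set.Icc 0 T ×ˢ closure O)
  cont_t : ContinuousOn (fun p : ℝ × ℝ => ut p.1 p.2) (Set.Icc 0 T ×ˢ closure O)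
  cont_x : ContinuousOn (fun p : ℝ × ℝ => ux p.1 p.2) (Set.Icc 0 T ×ˢ closure O)
  cont_xx : ContinuousOn (fun p : ℝ × ℝ => uxx p.1 p.2) (Set.Icc 0 T ×ˢ closure O)
  deriv_t : ∀ t ∈ Set.Icc (0:ℝ) T, ∀ x ∈ closure O,
    HasDerivWithinAt (fun s => u s x) (ut t x) (Set.Icc 0 T) t
  deriv_x : ∀ t ∈ Set.Icc (0:ℝ) T, ∀ x ∈ closure O,
    HasDerivWithinAt (fun y => u t y) (ux t x) (closure O) x
  deriv_xx : ∀ t ∈ Set.Icc (0:ℝ) T, ∀ x ∈ closure O,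
    HasDerivWithinAt (fun y => ux t y) (uxx t x) (closure O) x
  bdd : ∃ C : ℝ, ∀ t ∈ Set.Icc (0:ℝ) T, ∀ x ∈ closure O,
    |u t x| ≤ C ∧ |ut t x| ≤ C ∧ |ux t x| ≤ C ∧ |uxx t x| ≤ C

/-- Membership in `V`: a flow of finite positive Borel measures on
`closure O × A`, measurable in `t`, with integrable total mass on `[0,T]`. -/
def MemV (T : ℝ) (O A : Set ℝ) (m : ℝ → Measure (ℝ × ℝ)) : Prop :=
  (∀ t, m t Set.univ < ⊤) ∧
  (∀ t, m t ((closure O ×ˢ A)ᶜ) = 0) ∧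
  (∀ B : Set (ℝ × ℝ), MeasurableSet B → Measurable fun t => m t B) ∧
  IntegrableOn (fun t => (m t Set.univ).toReal) (Set.Icc 0 T)

/-- Standing assumptions on the coefficients `b` and `σ` (single-agent case):
measurable, bounded, Lipschitz in `x` uniformly in `(t,a)`, nonnegative diffusion,
and jointly continuous in `(x,a)` on `closure O × A` for each fixed `t`. -/
def CoefAssumption (O A : Set ℝ) (b σ : ℝ → ℝ → ℝ → ℝ) : Prop :=
  Measurable (fun q : ℝ × ℝ × ℝ => b q.1 q.2.1 q.2.2) ∧
  Measurable (fun q : ℝ × ℝ × ℝ => σ q.1 q.2.1 q.2.2) ∧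
  (∃ C : ℝ, ∀ t x a, |b t x a| ≤ C ∧ |σ t x a| ≤ C) ∧
  (∀ t x a, 0 ≤ σ t x a) ∧
  (∃ K : ℝ, ∀ t a x y, |b t x a - b t y a| ≤ K * |x - y| ∧ |σ t x a - σ t y a| ≤ K * |x - y|) ∧
  (∀ t, ContinuousOn (fun p : ℝ × ℝ => b t p.1 p.2) (closure O ×ˢ A)) ∧
  (∀ t, ContinuousOn (fun p : ℝ × ℝ => σ t p.1 p.2) (closure O ×ˢ A))

/-- Standing assumption on the initial measure: a probability measure on `O` with
`∫ ln(1 + |x|) dm₀* < ∞`. -/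
def InitAssumption (O : Set ℝ) (m0 : Measure ℝ) : Prop :=
  IsProbabilityMeasure m0 ∧ m0 Oᶜ = 0 ∧ Integrable (fun x => Real.log (1 + |x|)) m0

/-- Membership in the constraint set `R`: `μ` is a probability measure on
`[0,T] × closure O`, `m ∈ V`, and the Fokker–Planck constraint holds for all
test functions in `C_b^{1,2}`. -/
def MemR (T : ℝ) (O A : Set ℝ) (b σ : ℝ → ℝ → ℝ → ℝ) (m0 : Measure ℝ)
    (μ : Measure (ℝ × ℝ)) (m : ℝ → Measure (ℝ × ℝ)) : Prop :=
  IsProbabilityMeasure μ ∧ μ ((Set.Icc 0 T ×ˢ closure O)ᶜ) = 0 ∧ MemV T O A m ∧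
  ∀ u ut ux uxx : ℝ → ℝ → ℝ, IsCb12 T O u ut ux uxx →
    ∫ p, u p.1 p.2 ∂μ
      = (∫ x, u 0 x ∂m0)
        + ∫ t in Set.Icc 0 T,
            (∫ p, (ut t p.1 + (b t p.1 p.2 * ux t p.1 + σ t p.1 p.2 ^ 2 / 2 * uxx t p.1)) ∂(m t))

/-- Weak convergence of (finite) measures on `[0,T] × closure O` (tested against
bounded continuous functions). -/
def WeakConv (μn : ℕ → Measure (ℝ × ℝ)) (μ : Measure (ℝ × ℝ)) : Prop :=
  ∀ h : ℝ × ℝ → ℝ, Continuous h → (∃ C : ℝ, ∀ p, |h p| ≤ C) →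
    Tendsto (fun n => ∫ p, h p ∂(μn n)) atTop (nhds (∫ p, h p ∂μ))

/-- Convergence `mⁿ → m` in `V`: weak convergence of the associated finite
measures `m_tⁿ(dx,da)dt` on `[0,T] × closure O × A`. -/
def ConvV (T : ℝ) (mn : ℕ → ℝ → Measure (ℝ × ℝ)) (m : ℝ → Measure (ℝ × ℝ)) : Prop :=
  ∀ h : ℝ → ℝ × ℝ → ℝ, Continuous (fun q : ℝ × ℝ × ℝ => h q.1 q.2) →
    (∃ C : ℝ, ∀ t p, |h t p| ≤ C) →
    Tendsto (fun n => ∫ t in Set.Icc 0 T, (∫ p, h t p ∂(mn n t))) atTop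
      (nhds (∫ t in Set.Icc 0 T, (∫ p, h t p ∂(m t))))

/-- The linear-programming reward functional
`Γ(μ, m) = ∫₀^T ∫ f(t,x,a) m_t(dx,da) dt + ∫ g(t,x) μ(dt,dx)`. -/
def LPGamma (T : ℝ) (f : ℝ → ℝ → ℝ → ℝ) (g : ℝ → ℝ → ℝ)
    (μ : Measure (ℝ × ℝ)) (m : ℝ → Measure (ℝ × ℝ)) : ℝ :=
  (∫ t in Set.Icc 0 T, ∫ p, f t p.1 p.2 ∂(m t)) + ∫ p, g p.1 p.2 ∂μ

/-- Standing assumptions on the reward functions `f` and `g`: `f` measurable,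
bounded, upper semicontinuous in `(x,a)` for each `t`; `g` upper semicontinuous
and bounded from above. -/
def RewardAssumption (T : ℝ) (O A : Set ℝ) (f : ℝ → ℝ → ℝ → ℝ) (g : ℝ → ℝ → ℝ) : Prop :=
  Measurable (fun q : ℝ × ℝ × ℝ => f q.1 q.2.1 q.2.2) ∧
  (∃ C : ℝ, ∀ t x a, |f t x a| ≤ C) ∧
  (∀ t, UpperSemicontinuousOn (fun p : ℝ × ℝ => f t p.1 p.2) (closure O ×ˢ A)) ∧
  UpperSemicontinuousOn (fun p : ℝ × ℝ => g p.1 p.2) (Set.Icc 0 T ×ˢ closure O) ∧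
  (∃ C : ℝ, ∀ t x, g t x ≤ C)


open ProbabilityTheory in
lemma BV.meas_indicator {α : Type*} [MeasurableSpace α] [TopologicalSpace α]
    [OpensMeasurableSpace α] {f : α → ℝ} {s : Set α} (hf : ContinuousOn f s)
    (hs : IsClosed s) : Measurable (s.indicator f) := by
  classical
  rw [← Set.piecewise_eq_indicator]
  exact hf.measurable_piecewise continuousOn_const hs.measurableSet

open ProbabilityTheory in
lemma BV.isSFiniteKernel_of_finite (κ : Kernel ℝ (ℝ × ℝ))
    (hfin : ∀ t, κ t Set.univ < ⊤) : IsSFiniteKernel κ := by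
  classical
  have hmu : Measurable fun t => κ t Set.univ := κ.measurable_coe MeasurableSet.univ
  set P : ℕ → Set ℝ := fun n => (fun t => κ t Set.univ) ⁻¹' Set.Ico (n : ENNReal) (n + 1) with hPdef
  have hPmeas : ∀ n, MeasurableSet (P n) := fun n => hmu measurableSet_Ico
  let κs : ℕ → Kernel ℝ (ℝ × ℝ) := fun n =>
    { toFun := fun t => if t ∈ P n then κ t else 0
      measurable' := by
        apply Measure.measurable_of_measurable_coe
        intro s hs
        have heq : (fun t => (if t ∈ P n then κ t else 0) s)
            = fun t => if t ∈ P n then κ t s else 0 := by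
          ext t; split <;> simp
        rw [heq]
        exact Measurable.ite (hPmeas n) (κ.measurable_coe hs) measurable_const }
  have happ : ∀ n t, κs n t = if t ∈ P n then κ t else 0 := fun n t => rfl
  have hκs : ∀ n, IsFiniteKernel (κs n) := by
    intro n
    refine ⟨⟨(n : ENNReal) + 1, by simp, fun t => ?_⟩⟩
    rw [happ]
    split
    · exact le_of_lt (by exact (Set.mem_preimage.mp ‹t ∈ P n›).2)
    · simp
  refine ⟨⟨κs, hκs, ?_⟩⟩
  refine Kernel.ext fun t => Measure.ext fun s hs => ?_
  rw [Kernel.sum_apply' _ _ hs]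
  have hne : κ t Set.univ ≠ ⊤ := (hfin t).ne
  set n₀ := ⌊(κ t Set.univ).toReal⌋₊ with hn₀
  have htop : ∀ n : ℕ, ((n : ENNReal) + 1) ≠ ⊤ := by intro n; simp
  have hmem : ∀ n, t ∈ P n ↔ n = n₀ := by
    intro n
    constructor
    · rintro ⟨h1, h2⟩
      have h1' : (n : ℝ) ≤ (κ t Set.univ).toReal := by
        have := ENNReal.toReal_mono hne h1
        simpa using this
      have h2' : (κ t Set.univ).toReal < (n : ℝ) + 1 := by
        have := (ENNReal.toReal_lt_toReal hne (htop n)).mpr h2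
        simpa [ENNReal.toReal_add] using this
      exact ((Nat.floor_eq_iff ENNReal.toReal_nonneg).mpr ⟨h1', h2'⟩).symm
    · rintro rfl
      constructor
      · have h1 : ((n₀ : ℝ)) ≤ (κ t Set.univ).toReal := Nat.floor_le ENNReal.toReal_nonneg
        rw [show ((n₀ : ENNReal)) = ENNReal.ofReal ((n₀ : ℝ)) by simp [ENNReal.ofReal_natCast]]
        exact ENNReal.ofReal_le_of_le_toReal h1
      · have h2 : (κ t Set.univ).toReal < (n₀ : ℝ) + 1 := Nat.lt_floor_add_one _
        rw [show ((n₀ : ENNReal) + 1) = ENNReal.ofReal ((n₀ : ℝ) + 1) by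
          simp [ENNReal.ofReal_add, ENNReal.ofReal_natCast]]
        exact (ENNReal.lt_ofReal_iff_toReal_lt hne).mpr h2
  have hfun : ∀ n, κs n t s = if n = n₀ then κ t s else 0 := by
    intro n
    rw [happ]
    by_cases hn : n = n₀
    · rw [if_pos ((hmem n).mpr hn), if_pos hn]
    · rw [if_neg (fun hmem' => hn ((hmem n).mp hmem')), if_neg hn]
      simp
  simp_rw [hfun]
  rw [tsum_eq_single n₀ (fun n hn => if_neg hn)]
  simp

open ProbabilityTheory in
lemma BV.measurable_integral_flow (m : ℝ → Measure (ℝ × ℝ))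
    (hfin : ∀ t, m t Set.univ < ⊤)
    (hmeas : ∀ B : Set (ℝ × ℝ), MeasurableSet B → Measurable fun t => m t B)
    {F : ℝ → ℝ × ℝ → ℝ} (hF : StronglyMeasurable (Function.uncurry F)) :
    StronglyMeasurable fun t => ∫ p, F t p ∂(m t) := by
  let κ : Kernel ℝ (ℝ × ℝ) := ⟨m, Measure.measurable_of_measurable_coe m hmeas⟩
  haveI : IsSFiniteKernel κ := BV.isSFiniteKernel_of_finite κ hfin
  exact MeasureTheory.StronglyMeasurable.integral_kernel_prod_right (κ := κ) hF

lemma BV.integrable_of_bdd {ν : Measure (ℝ × ℝ)} (hν : ν Set.univ < ⊤) {f : ℝ × ℝ → ℝ}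
    (hf : AEStronglyMeasurable f ν) {C : ℝ} (hC : ∀ᵐ p ∂ν, |f p| ≤ C) :
    Integrable f ν := by
  haveI : IsFiniteMeasure ν := ⟨hν⟩
  exact (integrable_const C).mono' hf (by simpa [Real.norm_eq_abs] using hC)

set_option maxHeartbeats 1000000 in
/-- A bounded variation property: for `h ∈ C_b^{1,2}([0,T]×Ō)` and
`(μ, m) ∈ R`, there is a constant `C = C(b,σ,h) > 0` such that for every
`ψ ∈ C¹([0,T])`, `∫₀^T ψ'(t) (∫ h(t,x) m_t(dx,da)) dt ≤ C ‖ψ‖_∞`.  In particular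
`t ↦ ∫ h(t,x) m_t(dx,da)` is in `L¹((0,T))` with `L¹`-norm at most `T ‖h‖_∞` and its
variation (the supremum over `ψ ∈ C_c¹((0,T))` with `‖ψ‖_∞ ≤ 1` of `∫₀^T ψ' ·`) is at
most `C`; hence it is of bounded variation with BV norm at most `T ‖h‖_∞ + C`. -/
theorem bounded_variation_of_memR
    (T : ℝ) (hT : 0 < T) (O A : Set ℝ) (hO : IsOpen O) (hA : IsCompact A)
    (b σ : ℝ → ℝ → ℝ → ℝ) (hbσ : CoefAssumption O A b σ)
    (m0 : Measure ℝ) (hm0 : InitAssumption O m0)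
    (h ht hx hxx : ℝ → ℝ → ℝ) (hh : IsCb12 T O h ht hx hxx)
    (μ : Measure (ℝ × ℝ)) (m : ℝ → Measure (ℝ × ℝ))
    (hR : MemR T O A b σ m0 μ m) :
    ∃ C : ℝ, 0 < C ∧
      -- the key inequality, for every ψ ∈ C¹([0,T]) with ‖ψ‖_∞ ≤ Cψ
      (∀ ψ dψ : ℝ → ℝ,
        (∀ t ∈ Set.Icc (0:ℝ) T, HasDerivWithinAt ψ (dψ t) (Set.Icc 0 T) t) →
        ContinuousOn dψ (Set.Icc 0 T) →
        ∀ Cψ : ℝ, (∀ t ∈ Set.Icc (0:ℝ) T, |ψ t| ≤ Cψ) →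
          (∫ t in Set.Icc 0 T, dψ t * (∫ p, h t p.1 ∂(m t))) ≤ C * Cψ) ∧
      -- L¹ membership and the L¹-norm bound T‖h‖_∞
      IntegrableOn (fun t => ∫ p, h t p.1 ∂(m t)) (Set.Icc 0 T) ∧
      (∀ Ch : ℝ, (∀ t ∈ Set.Icc (0:ℝ) T, ∀ x ∈ closure O, |h t x| ≤ Ch) →
        (∫ t in Set.Icc 0 T, |∫ p, h t p.1 ∂(m t)|) ≤ T * Ch) ∧
      -- the variation over C¹ compactly supported ψ with ‖ψ‖_∞ ≤ 1 is at most C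
      (∀ ψ dψ : ℝ → ℝ, (∀ t, HasDerivAt ψ (dψ t) t) → Continuous dψ →
        tsupport ψ ⊆ Set.Ioo 0 T → (∀ t, |ψ t| ≤ 1) →
          (∫ t in Set.Icc 0 T, dψ t * (∫ p, h t p.1 ∂(m t))) ≤ C) := by
  classical
  obtain ⟨hμprob, hμsupp, hmV, hFP⟩ := hR
  obtain ⟨hfin, hsuppm, hmeasm, hmass⟩ := hmV
  haveI : IsProbabilityMeasure μ := hμprob
  have hfinI : ∀ t, IsFiniteMeasure (m t) := fun t => ⟨hfin t⟩
  obtain ⟨hm0prob, hm0supp, -⟩ := hm0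
  haveI : IsProbabilityMeasure m0 := hm0prob
  obtain ⟨Ch, hCh⟩ := hh.bdd
  obtain ⟨hbmeas, hσmeas, ⟨Cb, hCb⟩, hσnn, -, -, -⟩ := hbσ
  -- O is nonempty
  have hOne : O.Nonempty := by
    rcases Set.eq_empty_or_nonempty O with hO' | hO'
    · exfalso
      rw [hO', Set.compl_empty] at hm0supp
      simp [measure_univ] at hm0supp
    · exact hO'
  obtain ⟨x₀, hx₀O⟩ := hOne
  have hx₀ : x₀ ∈ closure O := subset_closure hx₀O
  have h0T : (0:ℝ) ∈ Set.Icc (0:ℝ) T := ⟨le_refl 0, hT.le⟩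
  have hCh0 : 0 ≤ Ch := le_trans (abs_nonneg _) (hCh 0 h0T x₀ hx₀).1
  have hCb0 : 0 ≤ Cb := le_trans (abs_nonneg _) (hCb 0 0 0).1
  set S : Set (ℝ × ℝ) := Set.Icc 0 T ×ˢ closure O with hSdef
  have hSclosed : IsClosed S := isClosed_Icc.prod isClosed_closure
  set E : Set (ℝ × ℝ) := closure O ×ˢ A with hEdef
  -- support facts
  have haeS : ∀ᵐ p ∂μ, p ∈ S := by
    rw [MeasureTheory.ae_iff]
    exact hμsupp
  have haeO : ∀ᵐ x ∂m0, x ∈ O := by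
    rw [MeasureTheory.ae_iff]
    exact hm0supp
  have haeE : ∀ t, ∀ᵐ p ∂(m t), p ∈ E := by
    intro t
    rw [MeasureTheory.ae_iff]
    exact hsuppm t
  -- indicator versions of test functions
  set ind : (ℝ → ℝ → ℝ) → ℝ → ℝ × ℝ → ℝ :=
    fun g t p => S.indicator (fun q : ℝ × ℝ => g q.1 q.2) (t, p.1) with hinddef
  have hindSM : ∀ g : ℝ → ℝ → ℝ, ContinuousOn (fun q : ℝ × ℝ => g q.1 q.2) S →
      StronglyMeasurable (Function.uncurry (ind g)) := by
    intro g hg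
    have h1 : Measurable (S.indicator fun q : ℝ × ℝ => g q.1 q.2) :=
      BV.meas_indicator hg hSclosed
    have h2 : Measurable fun q : ℝ × (ℝ × ℝ) => (q.1, q.2.1) :=
      measurable_fst.prodMk (measurable_fst.comp measurable_snd)
    exact (h1.comp h2).stronglyMeasurable
  have hindbd : ∀ (g : ℝ → ℝ → ℝ) (Cg : ℝ), 0 ≤ Cg →
      (∀ t ∈ Set.Icc (0:ℝ) T, ∀ x ∈ closure O, |g t x| ≤ Cg) →
      ∀ t p, |ind g t p| ≤ Cg := by
    intro g Cg hCg hg t p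
    simp only [hinddef]
    by_cases hmem : (t, p.1) ∈ S
    · rw [Set.indicator_of_mem hmem]
      exact hg t hmem.1 p.1 hmem.2
    · rw [Set.indicator_of_notMem hmem]
      simpa using hCg
  have hindae : ∀ g : ℝ → ℝ → ℝ, ∀ t ∈ Set.Icc (0:ℝ) T,
      ∀ᵐ p ∂(m t), g t p.1 = ind g t p := by
    intro g t htm
    filter_upwards [haeE t] with p hpE
    have hmem : (t, p.1) ∈ S := ⟨htm, hpE.1⟩
    simp only [hinddef]
    rw [Set.indicator_of_mem hmem]
  -- strong measurability and integrability of the flows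
  have hGhSM : StronglyMeasurable (Function.uncurry (ind h)) := hindSM h hh.cont
  set GR : ℝ → ℝ × ℝ → ℝ := fun t p =>
    ind ht t p + (b t p.1 p.2 * ind hx t p + σ t p.1 p.2 ^ 2 / 2 * ind hxx t p) with hGRdef
  have hGRSM : StronglyMeasurable (Function.uncurry GR) := by
    have h1 := hindSM ht hh.cont_t
    have h2 := hindSM hx hh.cont_x
    have h3 := hindSM hxx hh.cont_xx
    have hbm : StronglyMeasurable (fun q : ℝ × (ℝ × ℝ) => b q.1 q.2.1 q.2.2) :=
      hbmeas.stronglyMeasurable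
    have hσm : StronglyMeasurable (fun q : ℝ × (ℝ × ℝ) => σ q.1 q.2.1 q.2.2 ^ 2 / 2) :=
      ((hσmeas.pow_const 2).div_const 2).stronglyMeasurable
    exact h1.add ((hbm.mul h2).add (hσm.mul h3))
  have hGhbd : ∀ t p, |ind h t p| ≤ Ch :=
    hindbd h Ch hCh0 fun t ht' x hx' => (hCh t ht' x hx').1
  set CR : ℝ := Ch + (Cb * Ch + Cb ^ 2 / 2 * Ch) with hCRdef
  have hCR0 : 0 ≤ CR := by
    have h1 : (0:ℝ) ≤ Cb ^ 2 / 2 := by positivity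
    have h2 : 0 ≤ Cb * Ch := mul_nonneg hCb0 hCh0
    have h3 : 0 ≤ Cb ^ 2 / 2 * Ch := mul_nonneg h1 hCh0
    rw [hCRdef]; linarith
  have hGRbd : ∀ t p, |GR t p| ≤ CR := by
    intro t p
    have e1 := hindbd ht Ch hCh0 (fun t ht' x hx' => (hCh t ht' x hx').2.1) t p
    have e2 := hindbd hx Ch hCh0 (fun t ht' x hx' => (hCh t ht' x hx').2.2.1) t p
    have e3 := hindbd hxx Ch hCh0 (fun t ht' x hx' => (hCh t ht' x hx').2.2.2) t p
    have hb' := (hCb t p.1 p.2).1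
    have hσ' := (hCb t p.1 p.2).2
    have h4 : |σ t p.1 p.2 ^ 2 / 2| ≤ Cb ^ 2 / 2 := by
      have hσ2 : σ t p.1 p.2 ^ 2 ≤ Cb ^ 2 := by nlinarith [abs_le.mp hσ']
      rw [abs_of_nonneg (by positivity)]
      linarith
    have a1 : |b t p.1 p.2 * ind hx t p| ≤ Cb * Ch := by
      rw [abs_mul]; exact mul_le_mul hb' e2 (abs_nonneg _) hCb0
    have a2 : |σ t p.1 p.2 ^ 2 / 2 * ind hxx t p| ≤ Cb ^ 2 / 2 * Ch := by
      rw [abs_mul]; exact mul_le_mul h4 e3 (abs_nonneg _) (by positivity)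
    simp only [hGRdef, hCRdef]
    calc |ind ht t p + (b t p.1 p.2 * ind hx t p + σ t p.1 p.2 ^ 2 / 2 * ind hxx t p)|
        ≤ |ind ht t p| + |b t p.1 p.2 * ind hx t p + σ t p.1 p.2 ^ 2 / 2 * ind hxx t p| :=
          abs_add_le _ _
      _ ≤ Ch + (Cb * Ch + Cb ^ 2 / 2 * Ch) := by
          have := abs_add_le (b t p.1 p.2 * ind hx t p) (σ t p.1 p.2 ^ 2 / 2 * ind hxx t p)
          linarith
  -- per-t integrability
  have hGhint : ∀ t, Integrable (ind h t) (m t) := fun t =>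
    BV.integrable_of_bdd (hfin t) (hGhSM.of_uncurry_left).aestronglyMeasurable
      (Filter.Eventually.of_forall (hGhbd t))
  have hGRint : ∀ t, Integrable (GR t) (m t) := fun t =>
    BV.integrable_of_bdd (hfin t) (hGRSM.of_uncurry_left).aestronglyMeasurable
      (Filter.Eventually.of_forall (hGRbd t))
  -- integral bounds in t
  have hIGhabs : ∀ t, |∫ p, ind h t p ∂(m t)| ≤ Ch * (m t Set.univ).toReal := by
    intro t
    haveI := hfinI t
    have := norm_integral_le_of_norm_le_const (μ := m t) (f := ind h t) (C := Ch)
      (Filter.Eventually.of_forall fun p => by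
        simpa [Real.norm_eq_abs] using hGhbd t p)
    simpa [Real.norm_eq_abs, Measure.real] using this
  have hIGRabs : ∀ t, |∫ p, GR t p ∂(m t)| ≤ CR * (m t Set.univ).toReal := by
    intro t
    haveI := hfinI t
    have := norm_integral_le_of_norm_le_const (μ := m t) (f := GR t) (C := CR)
      (Filter.Eventually.of_forall fun p => by
        simpa [Real.norm_eq_abs] using hGRbd t p)
    simpa [Real.norm_eq_abs, Measure.real] using this
  -- measurability in t
  have hGhsm' : StronglyMeasurable fun t => ∫ p, ind h t p ∂(m t) :=
    BV.measurable_integral_flow m hfin hmeasm hGhSM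
  have hGRsm' : StronglyMeasurable fun t => ∫ p, GR t p ∂(m t) :=
    BV.measurable_integral_flow m hfin hmeasm hGRSM
  have hGhIntOn : IntegrableOn (fun t => ∫ p, ind h t p ∂(m t)) (Set.Icc 0 T) := by
    refine (hmass.const_mul Ch).mono' hGhsm'.aestronglyMeasurable.restrict ?_
    refine Filter.Eventually.of_forall fun t => ?_
    simpa [Real.norm_eq_abs] using hIGhabs t
  -- part 2 : integrability of t ↦ ∫ h dm_t
  have part2 : IntegrableOn (fun t => ∫ p, h t p.1 ∂(m t)) (Set.Icc 0 T) := by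
    refine hGhIntOn.congr_fun ?_ measurableSet_Icc
    intro t htm
    exact (integral_congr_ae (hindae h t htm)).symm
  -- total mass
  set M : ℝ := ∫ t in Set.Icc (0:ℝ) T, (m t Set.univ).toReal with hMdef
  have hM0 : 0 ≤ M := by
    rw [hMdef]
    exact setIntegral_nonneg measurableSet_Icc fun t _ => ENNReal.toReal_nonneg
  -- M ≤ T using the Fokker–Planck equation with u(t,x) = t
  have hMT : M ≤ T := by
    have hu0 : IsCb12 T O (fun t _ => t) (fun _ _ => 1) (fun _ _ => 0) (fun _ _ => 0) := by
      refine ⟨continuous_fst.continuousOn, continuousOn_const, continuousOn_const,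
        continuousOn_const, ?_, ?_, ?_, ?_⟩
      · intro t htm x hxm
        exact hasDerivWithinAt_id t _
      · intro t htm x hxm
        exact hasDerivWithinAt_const _ _ _
      · intro t htm x hxm
        exact hasDerivWithinAt_const _ _ _
      · refine ⟨max T 1, fun t htm x hxm => ⟨?_, ?_, ?_, ?_⟩⟩
        · rw [abs_of_nonneg htm.1]; exact le_max_of_le_left htm.2
        · rw [abs_one]; exact le_max_right T 1
        · rw [abs_zero]; exact le_max_of_le_right zero_le_one
        · rw [abs_zero]; exact le_max_of_le_right zero_le_one
    have FP0 := hFP _ _ _ _ hu0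
    have hinner0 : ∀ t ∈ Set.Icc (0:ℝ) T,
        (∫ p : ℝ × ℝ, ((1:ℝ) + (b t p.1 p.2 * 0 + σ t p.1 p.2 ^ 2 / 2 * 0)) ∂(m t))
          = (m t Set.univ).toReal := by
      intro t _
      haveI := hfinI t
      simp [Measure.real]
    have hEq0 : (∫ t in Set.Icc (0:ℝ) T,
        (∫ p : ℝ × ℝ, ((1:ℝ) + (b t p.1 p.2 * 0 + σ t p.1 p.2 ^ 2 / 2 * 0)) ∂(m t))) = M := by
      rw [hMdef]
      exact setIntegral_congr_fun measurableSet_Icc fun t htm => hinner0 t htm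
    have hL : (∫ p : ℝ × ℝ, p.1 ∂μ) = (∫ _x : ℝ, (0:ℝ) ∂m0) + M :=
      FP0.trans (congrArg _ hEq0)
    rw [integral_zero, zero_add] at hL
    have hint1 : Integrable (fun p : ℝ × ℝ => p.1) μ := by
      refine (integrable_const T).mono' measurable_fst.aestronglyMeasurable ?_
      filter_upwards [haeS] with p hp
      rw [Real.norm_eq_abs, abs_of_nonneg hp.1.1]
      exact hp.1.2
    have hle : (∫ p : ℝ × ℝ, p.1 ∂μ) ≤ ∫ _p : ℝ × ℝ, T ∂μ := by
      refine integral_mono_ae hint1 (integrable_const T) ?_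
      filter_upwards [haeS] with p hp
      exact hp.1.2
    rw [integral_const, Measure.real, measure_univ] at hle
    simp only [ENNReal.toReal_one, one_smul] at hle
    linarith [hL ▸ hle]
  -- the constant
  set C : ℝ := 2 * Ch + CR * M + 1 with hCdef
  have hCpos : 0 < C := by
    have : 0 ≤ CR * M := mul_nonneg hCR0 hM0
    rw [hCdef]; linarith
  -- the key estimate
  have key : ∀ ψ dψ : ℝ → ℝ,
      (∀ t ∈ Set.Icc (0:ℝ) T, HasDerivWithinAt ψ (dψ t) (Set.Icc 0 T) t) →
      ContinuousOn dψ (Set.Icc 0 T) →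
      ∀ Cψ : ℝ, (∀ t ∈ Set.Icc (0:ℝ) T, |ψ t| ≤ Cψ) →
      (∫ t in Set.Icc 0 T, dψ t * (∫ p, h t p.1 ∂(m t))) ≤ C * Cψ := by
    intro ψ dψ hψ hdψ Cψ hCψ
    have hCψ0 : 0 ≤ Cψ := le_trans (abs_nonneg _) (hCψ 0 h0T)
    have hψc : ContinuousOn ψ (Set.Icc 0 T) := fun t htm => (hψ t htm).continuousWithinAt
    obtain ⟨Cd, hCdbd⟩ := isCompact_Icc.exists_bound_of_continuousOn hdψ
    have hCd' : ∀ t ∈ Set.Icc (0:ℝ) T, |dψ t| ≤ Cd := fun t htm => by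
      simpa [Real.norm_eq_abs] using hCdbd t htm
    have hCd0 : 0 ≤ Cd := le_trans (abs_nonneg _) (hCd' 0 h0T)
    -- u = ψ h belongs to C_b^{1,2}
    have hψS : ContinuousOn (fun q : ℝ × ℝ => ψ q.1) S :=
      hψc.comp continuous_fst.continuousOn fun q hq => hq.1
    have hdψS : ContinuousOn (fun q : ℝ × ℝ => dψ q.1) S :=
      hdψ.comp continuous_fst.continuousOn fun q hq => hq.1
    have hu : IsCb12 T O (fun t x => ψ t * h t x)
        (fun t x => dψ t * h t x + ψ t * ht t x)
        (fun t x => ψ t * hx t x) (fun t x => ψ t * hxx t x) := by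
      refine ⟨hψS.mul hh.cont, (hdψS.mul hh.cont).add (hψS.mul hh.cont_t),
        hψS.mul hh.cont_x, hψS.mul hh.cont_xx, ?_, ?_, ?_, ?_⟩
      · intro t htm x hxm
        exact (hψ t htm).mul (hh.deriv_t t htm x hxm)
      · intro t htm x hxm
        exact HasDerivWithinAt.const_mul (ψ t) (hh.deriv_x t htm x hxm)
      · intro t htm x hxm
        exact HasDerivWithinAt.const_mul (ψ t) (hh.deriv_xx t htm x hxm)
      · refine ⟨Cψ * Ch + (Cd * Ch + Cψ * Ch), fun t htm x hxm => ?_⟩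
        obtain ⟨b1, b2, b3, b4⟩ := hCh t htm x hxm
        have e0 : |ψ t| ≤ Cψ := hCψ t htm
        have e1 : |dψ t| ≤ Cd := hCd' t htm
        have p1 : |ψ t * h t x| ≤ Cψ * Ch := by
          rw [abs_mul]; exact mul_le_mul e0 b1 (abs_nonneg _) hCψ0
        have p2 : |dψ t * h t x| ≤ Cd * Ch := by
          rw [abs_mul]; exact mul_le_mul e1 b1 (abs_nonneg _) hCd0
        have p3 : |ψ t * ht t x| ≤ Cψ * Ch := by
          rw [abs_mul]; exact mul_le_mul e0 b2 (abs_nonneg _) hCψ0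
        have p4 : |ψ t * hx t x| ≤ Cψ * Ch := by
          rw [abs_mul]; exact mul_le_mul e0 b3 (abs_nonneg _) hCψ0
        have p5 : |ψ t * hxx t x| ≤ Cψ * Ch := by
          rw [abs_mul]; exact mul_le_mul e0 b4 (abs_nonneg _) hCψ0
        have p6 : |dψ t * h t x + ψ t * ht t x| ≤ Cd * Ch + Cψ * Ch :=
          le_trans (abs_add_le _ _) (by linarith)
        have hnn : 0 ≤ Cψ * Ch := mul_nonneg hCψ0 hCh0
        have hnn2 : 0 ≤ Cd * Ch := mul_nonneg hCd0 hCh0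
        exact ⟨by linarith, by linarith, by linarith, by linarith⟩
    have FP := hFP _ _ _ _ hu
    -- pointwise identity for the inner integrals
    have hptwise : ∀ t ∈ Set.Icc (0:ℝ) T,
        (∫ p : ℝ × ℝ, (dψ t * h t p.1 + ψ t * ht t p.1 +
            (b t p.1 p.2 * (ψ t * hx t p.1) + σ t p.1 p.2 ^ 2 / 2 * (ψ t * hxx t p.1))) ∂(m t))
          = dψ t * (∫ p, ind h t p ∂(m t)) + ψ t * (∫ p, GR t p ∂(m t)) := by
      intro t htm
      have hae : (fun p : ℝ × ℝ => dψ t * h t p.1 + ψ t * ht t p.1 +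
            (b t p.1 p.2 * (ψ t * hx t p.1) + σ t p.1 p.2 ^ 2 / 2 * (ψ t * hxx t p.1)))
          =ᵐ[m t] fun p => dψ t * ind h t p + ψ t * GR t p := by
        filter_upwards [hindae h t htm, hindae ht t htm, hindae hx t htm, hindae hxx t htm]
          with p e1 e2 e3 e4
        simp only [hGRdef]
        rw [← e1, ← e2, ← e3, ← e4]
        ring
      have e5 : (∫ p, (dψ t * ind h t p + ψ t * GR t p) ∂(m t))
          = dψ t * (∫ p, ind h t p ∂(m t)) + ψ t * (∫ p, GR t p ∂(m t)) := by
        rw [integral_add ((hGhint t).const_mul _) ((hGRint t).const_mul _),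
          integral_const_mul, integral_const_mul]
      exact (integral_congr_ae hae).trans e5
    -- t-integrability of both terms
    have int1 : IntegrableOn (fun t => dψ t * (∫ p, ind h t p ∂(m t))) (Set.Icc 0 T) := by
      refine (hmass.const_mul (Cd * Ch)).mono'
        ((hdψ.aestronglyMeasurable measurableSet_Icc).mul
          hGhsm'.aestronglyMeasurable.restrict) ?_
      filter_upwards [ae_restrict_mem measurableSet_Icc] with t htm
      rw [Real.norm_eq_abs, abs_mul]
      calc |dψ t| * |∫ p, ind h t p ∂(m t)| ≤ Cd * (Ch * (m t Set.univ).toReal) :=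
          mul_le_mul (hCd' t htm) (hIGhabs t) (abs_nonneg _) hCd0
        _ = Cd * Ch * (m t Set.univ).toReal := by ring
    have int2 : IntegrableOn (fun t => ψ t * (∫ p, GR t p ∂(m t))) (Set.Icc 0 T) := by
      refine (hmass.const_mul (Cψ * CR)).mono'
        ((hψc.aestronglyMeasurable measurableSet_Icc).mul
          hGRsm'.aestronglyMeasurable.restrict) ?_
      filter_upwards [ae_restrict_mem measurableSet_Icc] with t htm
      rw [Real.norm_eq_abs, abs_mul]
      calc |ψ t| * |∫ p, GR t p ∂(m t)| ≤ Cψ * (CR * (m t Set.univ).toReal) :=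
          mul_le_mul (hCψ t htm) (hIGRabs t) (abs_nonneg _) hCψ0
        _ = Cψ * CR * (m t Set.univ).toReal := by ring
    -- split the FP identity
    have hEq2 : (∫ t in Set.Icc (0:ℝ) T,
        (∫ p : ℝ × ℝ, (dψ t * h t p.1 + ψ t * ht t p.1 +
          (b t p.1 p.2 * (ψ t * hx t p.1) + σ t p.1 p.2 ^ 2 / 2 * (ψ t * hxx t p.1))) ∂(m t)))
        = (∫ t in Set.Icc 0 T, dψ t * (∫ p, ind h t p ∂(m t)))
          + (∫ t in Set.Icc 0 T, ψ t * (∫ p, GR t p ∂(m t))) := by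
      have hsplit : (∫ t in Set.Icc (0:ℝ) T,
          (dψ t * (∫ p, ind h t p ∂(m t)) + ψ t * (∫ p, GR t p ∂(m t))))
          = (∫ t in Set.Icc 0 T, dψ t * (∫ p, ind h t p ∂(m t)))
            + (∫ t in Set.Icc 0 T, ψ t * (∫ p, GR t p ∂(m t))) :=
        integral_add int1 int2
      exact (setIntegral_congr_fun measurableSet_Icc
        fun t htm => hptwise t htm).trans hsplit
    have hFPr : (∫ p : ℝ × ℝ, ψ p.1 * h p.1 p.2 ∂μ)
        = (∫ x, ψ 0 * h 0 x ∂m0)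
          + ((∫ t in Set.Icc 0 T, dψ t * (∫ p, ind h t p ∂(m t)))
            + (∫ t in Set.Icc 0 T, ψ t * (∫ p, GR t p ∂(m t)))) :=
      FP.trans (congrArg _ hEq2)
    -- bounds
    have B1 : |∫ p : ℝ × ℝ, ψ p.1 * h p.1 p.2 ∂μ| ≤ Cψ * Ch := by
      have := norm_integral_le_of_norm_le_const (μ := μ)
        (f := fun p : ℝ × ℝ => ψ p.1 * h p.1 p.2) (C := Cψ * Ch)
        (by
          filter_upwards [haeS] with p hp
          rw [Real.norm_eq_abs, abs_mul]
          exact mul_le_mul (hCψ _ hp.1) (hCh _ hp.1 _ hp.2).1 (abs_nonneg _) hCψ0)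
      simpa [Real.norm_eq_abs, measure_univ] using this
    have B2 : |∫ x, ψ 0 * h 0 x ∂m0| ≤ Cψ * Ch := by
      have := norm_integral_le_of_norm_le_const (μ := m0)
        (f := fun x => ψ 0 * h 0 x) (C := Cψ * Ch)
        (by
          filter_upwards [haeO] with x hxO
          rw [Real.norm_eq_abs, abs_mul]
          exact mul_le_mul (hCψ 0 h0T) (hCh 0 h0T x (subset_closure hxO)).1
            (abs_nonneg _) hCψ0)
      simpa [Real.norm_eq_abs, measure_univ] using this
    have B3 : |∫ t in Set.Icc (0:ℝ) T, ψ t * (∫ p, GR t p ∂(m t))| ≤ Cψ * CR * M := by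
      have hb1 : (∫ t in Set.Icc (0:ℝ) T, |ψ t * (∫ p, GR t p ∂(m t))|)
          ≤ ∫ t in Set.Icc (0:ℝ) T, Cψ * CR * (m t Set.univ).toReal := by
        refine setIntegral_mono_on int2.abs (hmass.const_mul (Cψ * CR))
          measurableSet_Icc fun t htm => ?_
        rw [abs_mul]
        calc |ψ t| * |∫ p, GR t p ∂(m t)| ≤ Cψ * (CR * (m t Set.univ).toReal) :=
            mul_le_mul (hCψ t htm) (hIGRabs t) (abs_nonneg _) hCψ0
          _ = Cψ * CR * (m t Set.univ).toReal := by ring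
      rw [integral_const_mul, ← hMdef] at hb1
      have hn := norm_integral_le_integral_norm
        (μ := (volume : Measure ℝ).restrict (Set.Icc 0 T))
        (fun t => ψ t * (∫ p, GR t p ∂(m t)))
      simp only [Real.norm_eq_abs] at hn
      exact le_trans hn hb1
    -- assemble
    have hgoal_eq : (∫ t in Set.Icc 0 T, dψ t * (∫ p, h t p.1 ∂(m t)))
        = ∫ t in Set.Icc 0 T, dψ t * (∫ p, ind h t p ∂(m t)) := by
      refine setIntegral_congr_fun measurableSet_Icc fun t htm => ?_
      rw [integral_congr_ae (hindae h t htm)]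
    rw [hgoal_eq, hCdef]
    have hB1 := abs_le.mp B1
    have hB2 := abs_le.mp B2
    have hB3 := abs_le.mp B3
    linarith [hFPr, hB1.1, hB1.2, hB2.1, hB2.2, hB3.1, hB3.2, hCψ0, mul_nonneg hCψ0 hCh0]
  -- part 3
  have part3 : ∀ Ch' : ℝ, (∀ t ∈ Set.Icc (0:ℝ) T, ∀ x ∈ closure O, |h t x| ≤ Ch') →
      (∫ t in Set.Icc 0 T, |∫ p, h t p.1 ∂(m t)|) ≤ T * Ch' := by
    intro Ch' hCh'
    have hCh'0 : 0 ≤ Ch' := le_trans (abs_nonneg _) (hCh' 0 h0T x₀ hx₀)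
    have hstep : (∫ t in Set.Icc (0:ℝ) T, |∫ p, h t p.1 ∂(m t)|)
        ≤ ∫ t in Set.Icc (0:ℝ) T, Ch' * (m t Set.univ).toReal := by
      refine setIntegral_mono_on part2.abs (hmass.const_mul Ch')
        measurableSet_Icc fun t htm => ?_
      haveI := hfinI t
      have := norm_integral_le_of_norm_le_const (μ := m t)
        (f := fun p : ℝ × ℝ => h t p.1) (C := Ch')
        (by
          filter_upwards [haeE t] with p hp
          rw [Real.norm_eq_abs]
          exact hCh' t htm p.1 hp.1)
      simpa [Real.norm_eq_abs, Measure.real] using this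
    rw [integral_const_mul, ← hMdef] at hstep
    calc (∫ t in Set.Icc (0:ℝ) T, |∫ p, h t p.1 ∂(m t)|) ≤ Ch' * M := hstep
      _ ≤ Ch' * T := mul_le_mul_of_nonneg_left hMT hCh'0
      _ = T * Ch' := mul_comm _ _
  refine ⟨C, hCpos, key, part2, part3, ?_⟩
  intro ψ dψ hd hdc hsupp hb1
  have := key ψ dψ (fun t _ => (hd t).hasDerivWithinAt) hdc.continuousOn 1 (fun t _ => hb1 t)
  simpa using this
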